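/- arXiv:2006.05958 — 4 statements merged into one kernel-verified Lean document; each statement's English description precedes it below -/
import Mathlib

section
/- Let J : ℝ^m → Mₙ(ℝ) be a C⁴ map with J(x)² = -I for every x, and suppose that Δ²J(x) commutes with J(x) for every x (i.e. Δ²J·J = J·Δ²J pointwise). Then for every x, Δ²J(x) = J(x)·ΔJ(x)·ΔJ(x) + J(x)·∑_{p=1}^{m} ∂_pJ(x)·∂_p(ΔJ)(x) + J(x)·∑_{p=1}^{m} ∂_p(ΔJ)(x)·∂_pJ(x) + J(x)·Δ(∑_{p=1}^{m} ∂_pJ·∂_pJ)(x). -/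
open scoped Matrix.Norms.L2Operator

/-- The derivative of a matrix-valued map `J : ℝ^m → Mₙ(ℝ)` at `x` in the direction of
the `p`-th standard basis vector of `ℝ^m`. -/
noncomputable def dirDeriv {m n : ℕ} (J : (Fin m → ℝ) → Matrix (Fin n) (Fin n) ℝ)
    (p : Fin m) : (Fin m → ℝ) → Matrix (Fin n) (Fin n) ℝ :=
  fun x => fderiv ℝ J x (Pi.single p 1)

/-- The componentwise Laplacian `ΔJ(x) = ∑_p ∂_p ∂_p J (x)`. -/
noncomputable def matLap {m n : ℕ} (J : (Fin m → ℝ) → Matrix (Fin n) (Fin n) ℝ) :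
    (Fin m → ℝ) → Matrix (Fin n) (Fin n) ℝ :=
  fun x => ∑ p : Fin m, dirDeriv (dirDeriv J p) p x

section Helpers

variable {m n : ℕ}

local notation "Mat" => Matrix (Fin n) (Fin n) ℝ
local notation "Dom" => (Fin m → ℝ)

lemma contDiff_dirDeriv {f : Dom → Mat} {k : ℕ} (hf : ContDiff ℝ (k + 1 : ℕ) f)
    (p : Fin m) : ContDiff ℝ (k : ℕ) (dirDeriv f p) := by
  have h1 : ContDiff ℝ (k : ℕ) (fderiv ℝ f) :=
    hf.fderiv_right (by exact_mod_cast le_refl ((k : WithTop ℕ∞) + 1))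
  exact h1.clm_apply contDiff_const

lemma contDiff_matLap {f : Dom → Mat} {k : ℕ} (hf : ContDiff ℝ (k + 2 : ℕ) f) :
    ContDiff ℝ (k : ℕ) (matLap f) := by
  unfold matLap
  exact ContDiff.sum fun p _ => contDiff_dirDeriv (contDiff_dirDeriv hf p) p

lemma dirDeriv_mul {A B : Dom → Mat} (hA : Differentiable ℝ A)
    (hB : Differentiable ℝ B) (p : Fin m) (x : Dom) :
    dirDeriv (fun y => A y * B y) p x
      = A x * dirDeriv B p x + dirDeriv A p x * B x := by
  have h := ((hA x).hasFDerivAt.fun_mul' (hB x).hasFDerivAt)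
  unfold dirDeriv
  rw [h.fderiv]
  simp [smul_eq_mul]

lemma dirDeriv_add {A B : Dom → Mat} (hA : Differentiable ℝ A)
    (hB : Differentiable ℝ B) (p : Fin m) (x : Dom) :
    dirDeriv (fun y => A y + B y) p x = dirDeriv A p x + dirDeriv B p x := by
  unfold dirDeriv
  rw [fderiv_fun_add (hA x) (hB x)]
  rfl

lemma dirDeriv_congr {f g : Dom → Mat} (h : ∀ y, f y = g y) (p : Fin m) :
    dirDeriv f p = dirDeriv g p := by
  have : f = g := funext h
  rw [this]

lemma matLap_congr {f g : Dom → Mat} (h : ∀ y, f y = g y) :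
    matLap f = matLap g := by
  have : f = g := funext h
  rw [this]

lemma matLap_const (c : Mat) (x : Dom) : matLap (fun _ : Dom => c) x = 0 := by
  unfold matLap dirDeriv
  simp

lemma matLap_add {A B : Dom → Mat} (hA : ContDiff ℝ (2 : ℕ) A)
    (hB : ContDiff ℝ (2 : ℕ) B) (x : Dom) :
    matLap (fun y => A y + B y) x = matLap A x + matLap B x := by
  have hA1 : Differentiable ℝ A := hA.differentiable (by norm_num)
  have hB1 : Differentiable ℝ B := hB.differentiable (by norm_num)
  have hdA : ∀ p, Differentiable ℝ (dirDeriv A p) := fun p =>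
    (contDiff_dirDeriv (k := 1) hA p).differentiable (by norm_cast)
  have hdB : ∀ p, Differentiable ℝ (dirDeriv B p) := fun p =>
    (contDiff_dirDeriv (k := 1) hB p).differentiable (by norm_cast)
  unfold matLap
  rw [← Finset.sum_add_distrib]
  refine Finset.sum_congr rfl fun p _ => ?_
  have h1 : dirDeriv (fun y => A y + B y) p
      = fun y => dirDeriv A p y + dirDeriv B p y :=
    funext fun y => dirDeriv_add hA1 hB1 p y
  rw [h1, dirDeriv_add (hdA p) (hdB p)]

lemma matLap_mul {A B : Dom → Mat} (hA : ContDiff ℝ (2 : ℕ) A)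
    (hB : ContDiff ℝ (2 : ℕ) B) (x : Dom) :
    matLap (fun y => A y * B y) x
      = A x * matLap B x + matLap A x * B x
        + ∑ p : Fin m, (dirDeriv A p x * dirDeriv B p x
            + dirDeriv A p x * dirDeriv B p x) := by
  have hA1 : Differentiable ℝ A := hA.differentiable (by norm_num)
  have hB1 : Differentiable ℝ B := hB.differentiable (by norm_num)
  have hdA : ∀ p, Differentiable ℝ (dirDeriv A p) := fun p =>
    (contDiff_dirDeriv (k := 1) hA p).differentiable (by norm_cast)
  have hdB : ∀ p, Differentiable ℝ (dirDeriv B p) := fun p =>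
    (contDiff_dirDeriv (k := 1) hB p).differentiable (by norm_cast)
  have key : ∀ p : Fin m, dirDeriv (dirDeriv (fun y => A y * B y) p) p x
      = (A x * dirDeriv (dirDeriv B p) p x + dirDeriv A p x * dirDeriv B p x)
        + (dirDeriv A p x * dirDeriv B p x + dirDeriv (dirDeriv A p) p x * B x) := by
    intro p
    have h1 : dirDeriv (fun y => A y * B y) p
        = fun y => A y * dirDeriv B p y + dirDeriv A p y * B y :=
      funext fun y => dirDeriv_mul hA1 hB1 p y
    rw [h1, dirDeriv_add (hA1.fun_mul (hdB p)) ((hdA p).fun_mul hB1) p x,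
      dirDeriv_mul hA1 (hdB p) p x, dirDeriv_mul (hdA p) hB1 p x]
  conv_lhs => rw [matLap]
  rw [Finset.sum_congr rfl fun p _ => key p]
  rw [Finset.sum_add_distrib, Finset.sum_add_distrib, Finset.sum_add_distrib,
    ← Finset.mul_sum, ← Finset.sum_mul]
  simp only [matLap]
  rw [Finset.sum_add_distrib]
  abel

end Helpers

/-- The Euler–Lagrange equation `Δ²J = Q(J, ∇J, ∇²J, ∇³J)` for biharmonic almost complex
structures, rewritten from `[Δ²J, J] = 0` using `Δ²(J²) = 0`. -/
theorem bilaplacian_eq_Q_of_commute {m n : ℕ}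
    (J : (Fin m → ℝ) → Matrix (Fin n) (Fin n) ℝ)
    (hJ : ContDiff ℝ 4 J)
    (hsq : ∀ x, J x * J x = -1)
    (hcomm : ∀ x, matLap (matLap J) x * J x = J x * matLap (matLap J) x) :
    ∀ x,
      matLap (matLap J) x
        = J x * matLap J x * matLap J x
          + J x * ∑ p : Fin m, dirDeriv J p x * dirDeriv (matLap J) p x
          + J x * ∑ p : Fin m, dirDeriv (matLap J) p x * dirDeriv J p x
          + J x * matLap (fun y => ∑ p : Fin m, dirDeriv J p y * dirDeriv J p y) x := by
  intro x
  have hJ4 : ContDiff ℝ (4 : ℕ) J := by exact_mod_cast hJ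
  have hJ2 : ContDiff ℝ (2 : ℕ) J := hJ4.of_le (by norm_cast)
  have hJ1 : Differentiable ℝ J := hJ2.differentiable (by norm_cast)
  have hL2 : ContDiff ℝ (2 : ℕ) (matLap J) := contDiff_matLap (k := 2) hJ4
  -- first Laplacian of J² = -1 :
  have eq1 : ∀ y, J y * matLap J y + matLap J y * J y
      + ∑ p : Fin m, (dirDeriv J p y * dirDeriv J p y
          + dirDeriv J p y * dirDeriv J p y) = 0 := by
    intro y
    have h0 : matLap (fun z => J z * J z) y = 0 := by
      rw [matLap_congr (fun z => hsq z), matLap_const]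
    rw [← h0, matLap_mul hJ2 hJ2 y]
  -- second Laplacian
  have hJL : ContDiff ℝ (2 : ℕ) (fun y => J y * matLap J y) := hJ2.mul hL2
  have hLJ : ContDiff ℝ (2 : ℕ) (fun y => matLap J y * J y) := hL2.mul hJ2
  have hdJ3 : ∀ p, ContDiff ℝ (3 : ℕ) (dirDeriv J p) := fun p =>
    contDiff_dirDeriv (k := 3) hJ4 p
  have hS2 : ContDiff ℝ (2 : ℕ)
      (fun y => ∑ p : Fin m, dirDeriv J p y * dirDeriv J p y) :=
    ContDiff.sum fun p _ => (((hdJ3 p).of_le (by norm_cast)).mul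
      ((hdJ3 p).of_le (by norm_cast)))
  have hT2 : ContDiff ℝ (2 : ℕ)
      (fun y => ∑ p : Fin m, (dirDeriv J p y * dirDeriv J p y
          + dirDeriv J p y * dirDeriv J p y)) :=
    ContDiff.sum fun p _ => (((hdJ3 p).of_le (by norm_cast)).mul
      ((hdJ3 p).of_le (by norm_cast))).add
      (((hdJ3 p).of_le (by norm_cast)).mul ((hdJ3 p).of_le (by norm_cast)))
  have eq2 : matLap (fun y => J y * matLap J y) x
      + matLap (fun y => matLap J y * J y) x
      + matLap (fun y => ∑ p : Fin m, (dirDeriv J p y * dirDeriv J p y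
          + dirDeriv J p y * dirDeriv J p y)) x = 0 := by
    have h1 : matLap (fun y => (J y * matLap J y + matLap J y * J y)
        + ∑ p : Fin m, (dirDeriv J p y * dirDeriv J p y
            + dirDeriv J p y * dirDeriv J p y)) x = 0 := by
      have : (fun y => (J y * matLap J y + matLap J y * J y)
          + ∑ p : Fin m, (dirDeriv J p y * dirDeriv J p y
              + dirDeriv J p y * dirDeriv J p y))
          = fun _ => (0 : Matrix (Fin n) (Fin n) ℝ) := by
        funext y
        have := eq1 y
        rw [← this]
      rw [this, matLap_const]
    rw [matLap_add (hJL.add hLJ) hT2 x, matLap_add hJL hLJ x] at h1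
    exact h1
  -- expand the products
  have hdL : ∀ p, Differentiable ℝ (dirDeriv (matLap J) p) := fun p =>
    (contDiff_dirDeriv (k := 1) hL2 p).differentiable (by norm_cast)
  have hdJ : ∀ p, Differentiable ℝ (dirDeriv J p) := fun p =>
    ((hdJ3 p).of_le (by norm_cast : ((1:ℕ) : WithTop ℕ∞) ≤ ((3:ℕ) : WithTop ℕ∞))).differentiable (by norm_cast)
  have expJL := matLap_mul hJ2 hL2 x
  have expLJ := matLap_mul hL2 hJ2 x
  -- the doubled sum as twice the sum
  set B2 := matLap (matLap J) x with hB2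
  set L := matLap J x
  set C1 := ∑ p : Fin m, dirDeriv J p x * dirDeriv (matLap J) p x with hC1
  set C2 := ∑ p : Fin m, dirDeriv (matLap J) p x * dirDeriv J p x with hC2
  set DS := matLap (fun y => ∑ p : Fin m, dirDeriv J p y * dirDeriv J p y) x with hDS
  have hTsplit : matLap (fun y => ∑ p : Fin m, (dirDeriv J p y * dirDeriv J p y
      + dirDeriv J p y * dirDeriv J p y)) x = DS + DS := by
    have h1 : (fun y => ∑ p : Fin m, (dirDeriv J p y * dirDeriv J p y
        + dirDeriv J p y * dirDeriv J p y))
        = fun y => (∑ p : Fin m, dirDeriv J p y * dirDeriv J p y)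
          + ∑ p : Fin m, dirDeriv J p y * dirDeriv J p y := by
      funext y; rw [← Finset.sum_add_distrib]
    rw [h1, matLap_add hS2 hS2 x]
  have hCe1 : ∑ p : Fin m, (dirDeriv J p x * dirDeriv (matLap J) p x
      + dirDeriv J p x * dirDeriv (matLap J) p x) = C1 + C1 := by
    rw [Finset.sum_add_distrib]
  have hCe2 : ∑ p : Fin m, (dirDeriv (matLap J) p x * dirDeriv J p x
      + dirDeriv (matLap J) p x * dirDeriv J p x) = C2 + C2 := by
    rw [Finset.sum_add_distrib]
  rw [expJL, expLJ, hTsplit, hCe1, hCe2] at eq2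
  -- eq2 : (J B2 + L L + (C1+C1)) + (L B2' ... ) ... = 0
  have hc : B2 * J x = J x * B2 := hcomm x
  have key : J x * B2 + (L * L + C1 + C2 + DS)
      + (J x * B2 + (L * L + C1 + C2 + DS)) = 0 := by
    rw [← hc] at eq2 ⊢
    rw [← eq2]
    abel
  have key2 : J x * B2 + (L * L + C1 + C2 + DS) = 0 := by
    have h2 : (2 : ℝ) • (J x * B2 + (L * L + C1 + C2 + DS)) = 0 := by
      rw [two_smul]; exact key
    have := smul_eq_zero.mp h2
    rcases this with h | h
    · norm_num at h
    · exact h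
  have key3 : J x * (J x * B2) + J x * (L * L + C1 + C2 + DS) = 0 := by
    rw [← mul_add, key2, mul_zero]
  rw [← mul_assoc, hsq x, neg_one_mul] at key3
  have hfin : B2 = J x * (L * L + C1 + C2 + DS) := neg_add_eq_zero.mp key3
  rw [hfin, mul_add, mul_add, mul_add, ← mul_assoc]
end

section
/- Let A be a real n×n matrix with Aᵀ = -A and ‖A·A + I‖ < 1 (operator norm). Then -A·A is a symmetric positive definite matrix; it has a unique symmetric positive definite square root Q (Q² = -A·A); Q commutes with A; and the matrix J = Q⁻¹·A satisfies J² = -I and Jᵀ = -J. -/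
open Matrix
open scoped Matrix.Norms.L2Operator

private lemma posDef_of_posSemidef_isUnit {m : Type*} [Fintype m] [DecidableEq m]
    {M : Matrix m m ℝ} (hM : M.PosSemidef) (h : IsUnit M) : M.PosDef := by
  exact hM.posDef_iff_isUnit.mpr h

/-- From a skew-symmetric matrix `A` with `‖A·A + I‖ < 1` (operator norm), the matrix
`-A·A` is symmetric positive definite; it has a unique symmetric positive definite square
root `Q`; `Q` commutes with `A`; and `J = Q⁻¹·A` is a compatible linear complex structure. -/
theorem compatible_acs_from_skew_part {n : ℕ}
    (A : Matrix (Fin n) (Fin n) ℝ)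
    (hA : Aᵀ = -A)
    (hnorm : ‖A * A + 1‖ < 1) :
    (-(A * A))ᵀ = -(A * A) ∧ (-(A * A)).PosDef ∧
    ∃ Q : Matrix (Fin n) (Fin n) ℝ,
      (Qᵀ = Q ∧ Q.PosDef ∧ Q * Q = -(A * A)) ∧
      (∀ Q' : Matrix (Fin n) (Fin n) ℝ, Q'ᵀ = Q' → Q'.PosDef → Q' * Q' = -(A * A) → Q' = Q) ∧
      Q * A = A * Q ∧
      (Q⁻¹ * A) * (Q⁻¹ * A) = -1 ∧
      (Q⁻¹ * A)ᵀ = -(Q⁻¹ * A) := by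
  have hST : (-(A * A))ᵀ = -(A * A) := by
    rw [transpose_neg, transpose_mul, hA, neg_mul_neg]
  have hSeq : -(A * A) = Aᵀ * A := by rw [hA, neg_mul]
  have hSps : (-(A * A)).PosSemidef := by
    rw [hSeq]
    have := Matrix.posSemidef_conjTranspose_mul_self A
    rwa [conjTranspose_eq_transpose_of_trivial] at this
  have hSu : IsUnit (-(A * A)) := by
    have h1 : -(A * A) = 1 - (A * A + 1) := by abel
    rw [h1]
    exact isUnit_one_sub_of_norm_lt_one hnorm
  have hdS : (-(A * A)).det ≠ 0 := ((Matrix.isUnit_iff_isUnit_det _).mp hSu).ne_zero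
  have hdA : A.det ≠ 0 := by
    intro h
    apply hdS
    rw [hSeq, Matrix.det_mul, Matrix.det_transpose, h, mul_zero]
  have hSpd : (-(A * A)).PosDef := posDef_of_posSemidef_isUnit hSps hSu
  refine ⟨hST, hSpd, ?_⟩
  open scoped MatrixOrder in set Q := CFC.sqrt (-(A * A)) with hQdef
  clear_value Q
  have hQps : Q.PosSemidef := by open scoped MatrixOrder in rw [hQdef]; exact (CFC.sqrt_nonneg _).posSemidef
  have hQQ : Q * Q = -(A * A) := by open scoped MatrixOrder in rw [hQdef]; exact CFC.sqrt_mul_sqrt_self _ hSps.nonneg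
  have hQT : Qᵀ = Q := by
    rw [← conjTranspose_eq_transpose_of_trivial]
    exact hQps.1
  have hQu : IsUnit Q := by
    rw [Matrix.isUnit_iff_isUnit_det]
    have : IsUnit (Q.det * Q.det) := by
      rw [← Matrix.det_mul, hQQ]
      exact (Matrix.isUnit_iff_isUnit_det _).mp hSu
    exact isUnit_of_mul_isUnit_left this
  have hdQ : Q.det ≠ 0 := ((Matrix.isUnit_iff_isUnit_det _).mp hQu).ne_zero
  have hQpd : Q.PosDef := posDef_of_posSemidef_isUnit hQps hQu
  -- key commutation facts
  have e4 : A * Aᵀ = Q * Q := by rw [hA, mul_neg, hQQ]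
  have h1 : Aᵀ * A = Q * Q := by rw [← hSeq, hQQ]
  have hAS : A * (Q * Q) = (Q * Q) * A := by
    rw [hQQ, mul_neg, neg_mul, ← mul_assoc]
  have e1 : ∀ X : Matrix (Fin n) (Fin n) ℝ, Aᵀ * (A * X) = Q * (Q * X) := fun X => by
    rw [← mul_assoc, h1, mul_assoc]
  have e3 : ∀ X : Matrix (Fin n) (Fin n) ℝ, A * (Q * (Q * X)) = Q * (Q * (A * X)) :=
    fun X => by
      rw [← mul_assoc Q Q X, ← mul_assoc A, hAS, mul_assoc, mul_assoc]
  -- the conjugated matrix equals Q^3 by uniqueness of psd square roots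
  have hB1ps : (A * Q * Aᵀ).PosSemidef := by
    have := hQps.mul_mul_conjTranspose_same A
    rwa [conjTranspose_eq_transpose_of_trivial] at this
  have hB2ps : (Q * (Q * Q)).PosSemidef := by
    have := hQps.pow 3
    rwa [pow_succ, pow_two, mul_assoc] at this
    
  have key : (A * Q * Aᵀ) * (A * Q * Aᵀ) = (Q * (Q * Q)) * (Q * (Q * Q)) := by
    simp only [mul_assoc]
    rw [e1, e3, e3, e4]
  have hB12 : A * Q * Aᵀ = Q * (Q * Q) :=
    by open scoped MatrixOrder in rw [← CFC.sqrt_sq _ hB1ps.nonneg, ← CFC.sqrt_sq _ hB2ps.nonneg, pow_two, pow_two, key]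
  have hAtinv : Aᵀ * (Aᵀ)⁻¹ = 1 :=
    Matrix.mul_nonsing_inv _ (by rw [Matrix.det_transpose]; exact isUnit_iff_ne_zero.mpr hdA)
  have hQA : Q * A = A * Q := by
    have h6 : Q * A * Aᵀ = Q * (Q * Q) := by rw [mul_assoc, e4, ← mul_assoc, mul_assoc]
    have h5 : A * Q * Aᵀ = Q * A * Aᵀ := hB12.trans h6.symm
    have h7 := congrArg (· * (Aᵀ)⁻¹) h5
    simp only [mul_assoc, hAtinv, mul_one] at h7
    exact h7.symm
  have hQinvQ : Q⁻¹ * Q = 1 := Matrix.nonsing_inv_mul _ (isUnit_iff_ne_zero.mpr hdQ)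
  have hQQinv : Q * Q⁻¹ = 1 := Matrix.mul_nonsing_inv _ (isUnit_iff_ne_zero.mpr hdQ)
  have hQinvA : Q⁻¹ * A = A * Q⁻¹ := by
    calc Q⁻¹ * A = Q⁻¹ * A * (Q * Q⁻¹) := by rw [hQQinv, mul_one]
      _ = Q⁻¹ * (A * Q) * Q⁻¹ := by simp only [mul_assoc]
      _ = Q⁻¹ * (Q * A) * Q⁻¹ := by rw [hQA]
      _ = (Q⁻¹ * Q) * (A * Q⁻¹) := by simp only [mul_assoc]
      _ = A * Q⁻¹ := by rw [hQinvQ, one_mul]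
  have hSinv : (-(A * A))⁻¹ * (-(A * A)) = 1 :=
    Matrix.nonsing_inv_mul _ (isUnit_iff_ne_zero.mpr hdS)
  refine ⟨Q, ⟨hQT, hQpd, hQQ⟩, ?_, hQA, ?_, ?_⟩
  · intro Q' hT' hpd' hsq'
    rw [hQdef]
    open scoped MatrixOrder in exact ((CFC.sqrt_eq_iff _ _ hSps.nonneg hpd'.posSemidef.nonneg).mpr hsq').symm
  · calc (Q⁻¹ * A) * (Q⁻¹ * A) = Q⁻¹ * (A * Q⁻¹) * A := by simp only [mul_assoc]
      _ = Q⁻¹ * (Q⁻¹ * A) * A := by rw [← hQinvA]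
      _ = (Q⁻¹ * Q⁻¹) * (A * A) := by simp only [mul_assoc]
      _ = (Q * Q)⁻¹ * (A * A) := by rw [Matrix.mul_inv_rev]
      _ = -((-(A * A))⁻¹ * (-(A * A))) := by rw [hQQ, mul_neg, neg_neg]
      _ = -1 := by rw [hSinv]
  · rw [transpose_mul, hA, Matrix.transpose_nonsing_inv, hQT, neg_mul, ← hQinvA]
end

section
/- Let n ≥ 1 and let φ : ℝⁿ → ℝ be a continuous nonnegative function supported in the closed unit ball with ∫_{ℝⁿ} φ = 1. Then there exists a constant C > 0 (depending only on n and φ) such that for every R > 0 and every C¹ function f : ℝⁿ → ℝ, ∫_{B_R} |f(y) - f_*|² dy ≤ C · R² · ∫_{B_R} ‖∇f(y)‖² dy, where B_R is the ball of radius R centered at the origin and f_* = ∫_{B_R} R^{-n} φ(y/R) f(y) dy. -/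
open MeasureTheory InnerProductSpace
open scoped ENNReal NNReal

lemma pw_rpow_half_sq (x : ℝ≥0∞) : (x ^ ((1:ℝ)/2)) ^ (2 : ℕ) = x := by
  rw [← ENNReal.rpow_natCast, ← ENNReal.rpow_mul]; norm_num

lemma pw_jensen_sq {α : Type*} [MeasurableSpace α] (μ : Measure α) (a d : α → ℝ≥0∞)
    (ha : AEMeasurable a μ) (hd : AEMeasurable d μ) (hμa : ∫⁻ x, a x ∂μ ≤ 1) :
    (∫⁻ x, a x * d x ∂μ) ^ (2 : ℕ) ≤ ∫⁻ x, a x * (d x) ^ (2 : ℕ) ∂μ := by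
  have h22 : Real.HolderConjugate 2 2 := Real.holderConjugate_iff.2 ⟨one_lt_two, by norm_num⟩
  have hpt : ∀ x, a x * d x = (a x ^ ((1:ℝ)/2)) * ((a x ^ ((1:ℝ)/2)) * d x) := by
    intro x
    rw [← mul_assoc, ← ENNReal.rpow_add_of_nonneg _ _ (by norm_num) (by norm_num)]
    norm_num
  have key := ENNReal.lintegral_mul_le_Lp_mul_Lq μ h22
    (f := fun x => a x ^ ((1:ℝ)/2)) (g := fun x => a x ^ ((1:ℝ)/2) * d x)
    (ha.pow_const _) ((ha.pow_const _).mul hd)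
  have e1 : ∀ x : ℝ≥0∞, (x ^ ((1:ℝ)/2)) ^ (2 : ℝ) = x := by
    intro x; rw [← ENNReal.rpow_mul]; norm_num
  have e2 : ∀ x, (a x ^ ((1:ℝ)/2) * d x) ^ (2 : ℝ) = a x * d x ^ (2 : ℕ) := by
    intro x
    rw [ENNReal.mul_rpow_of_nonneg _ _ (by norm_num), e1, ← ENNReal.rpow_natCast]
    norm_num
  simp only [Pi.mul_apply, e1, e2] at key
  have key2 : ∫⁻ x, a x * d x ∂μ
      ≤ (∫⁻ x, a x ∂μ) ^ ((1:ℝ)/2) * (∫⁻ x, a x * d x ^ (2 : ℕ) ∂μ) ^ ((1:ℝ)/2) := by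
    calc ∫⁻ x, a x * d x ∂μ
        = ∫⁻ x, (a x ^ ((1:ℝ)/2)) * ((a x ^ ((1:ℝ)/2)) * d x) ∂μ := lintegral_congr hpt
      _ ≤ _ := key
  calc (∫⁻ x, a x * d x ∂μ) ^ (2 : ℕ)
      ≤ ((∫⁻ x, a x ∂μ) ^ ((1:ℝ)/2) * (∫⁻ x, a x * d x ^ (2 : ℕ) ∂μ) ^ ((1:ℝ)/2)) ^ (2 : ℕ) :=
        pow_le_pow_left' key2 2
    _ = (∫⁻ x, a x ∂μ) * (∫⁻ x, a x * d x ^ (2 : ℕ) ∂μ) := by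
        rw [mul_pow, pw_rpow_half_sq, pw_rpow_half_sq]
    _ ≤ 1 * (∫⁻ x, a x * d x ^ (2 : ℕ) ∂μ) := mul_le_mul_left hμa _
    _ = _ := one_mul _

lemma pw_stepB {α : Type*} [MeasurableSpace α] (μ : Measure α) (ψ g : α → ℝ)
    (hψ0 : ∀ x, 0 ≤ ψ x) (hIψ : Integrable ψ μ)
    (hIψg : Integrable (fun x => ψ x * g x) μ)
    (hψ1 : ∫ x, ψ x ∂μ = 1) (hmg : AEMeasurable g μ) (r : ℝ) :
    ENNReal.ofReal ((r - ∫ x, ψ x * g x ∂μ) ^ 2)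
      ≤ ∫⁻ x, ENNReal.ofReal (ψ x) * ENNReal.ofReal ((r - g x) ^ 2) ∂μ := by
  set m := ∫ x, ψ x * g x ∂μ with hm
  have hkey : r - m = ∫ x, ψ x * (r - g x) ∂μ := by
    have : (fun x => ψ x * (r - g x)) = fun x => ψ x * r - ψ x * g x := by ext x; ring
    rw [this, integral_sub (hIψ.mul_const r) hIψg, integral_mul_const, hψ1, one_mul]
  have habs : ENNReal.ofReal |r - m|
      ≤ ∫⁻ x, ENNReal.ofReal (ψ x) * ENNReal.ofReal |r - g x| ∂μ := by
    rw [hkey]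
    calc ENNReal.ofReal |∫ x, ψ x * (r - g x) ∂μ|
        = ‖∫ x, ψ x * (r - g x) ∂μ‖ₑ := (Real.enorm_eq_ofReal_abs _).symm
      _ ≤ ∫⁻ x, ‖ψ x * (r - g x)‖ₑ ∂μ := enorm_integral_le_lintegral_enorm _
      _ = ∫⁻ x, ENNReal.ofReal (ψ x) * ENNReal.ofReal |r - g x| ∂μ := by
          refine lintegral_congr fun x => ?_
          rw [Real.enorm_eq_ofReal_abs, abs_mul, abs_of_nonneg (hψ0 x),
            ENNReal.ofReal_mul (hψ0 x)]
  have hμa : ∫⁻ x, ENNReal.ofReal (ψ x) ∂μ ≤ 1 := by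
    rw [← ofReal_integral_eq_lintegral_ofReal hIψ (Filter.Eventually.of_forall hψ0), hψ1]
    simp
  have hdm : AEMeasurable (fun x => ENNReal.ofReal |r - g x|) μ := by
    have h1 : AEMeasurable (fun x => r - g x) μ := aemeasurable_const.sub hmg
    have h2 : AEMeasurable (fun x => |r - g x|) μ := by
      simpa [Real.norm_eq_abs] using h1.norm
    exact h2.ennreal_ofReal
  have hj := pw_jensen_sq μ (fun x => ENNReal.ofReal (ψ x))
    (fun x => ENNReal.ofReal |r - g x|)
    hIψ.aemeasurable.ennreal_ofReal hdm hμa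
  have e3 : ENNReal.ofReal ((r - m) ^ 2) = (ENNReal.ofReal |r - m|) ^ (2 : ℕ) := by
    rw [← sq_abs, ENNReal.ofReal_pow (abs_nonneg _)]
  have e4 : ∀ x, (ENNReal.ofReal |r - g x|) ^ (2 : ℕ) = ENNReal.ofReal ((r - g x) ^ 2) := by
    intro x; rw [← ENNReal.ofReal_pow (abs_nonneg _), sq_abs]
  calc ENNReal.ofReal ((r - m) ^ 2) = (ENNReal.ofReal |r - m|) ^ (2 : ℕ) := e3
    _ ≤ (∫⁻ x, ENNReal.ofReal (ψ x) * ENNReal.ofReal |r - g x| ∂μ) ^ (2 : ℕ) :=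
        pow_le_pow_left' habs 2
    _ ≤ ∫⁻ x, ENNReal.ofReal (ψ x) * (ENNReal.ofReal |r - g x|) ^ (2 : ℕ) ∂μ := hj
    _ = _ := lintegral_congr fun x => by rw [e4]

lemma pw_lintegral_affine {n : ℕ} (g : EuclideanSpace ℝ (Fin n) → ℝ≥0∞) (hg : Measurable g)
    {c : ℝ} (hc : c ≠ 0) (v : EuclideanSpace ℝ (Fin n)) :
    ∫⁻ z, g (c • z + v) = ENNReal.ofReal |(c ^ n)⁻¹| * ∫⁻ z, g z := by
  have hfr : Module.finrank ℝ (EuclideanSpace ℝ (Fin n)) = n := finrank_euclideanSpace_fin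
  have h1 : ∫⁻ w, g (w + v) ∂(Measure.map (fun x => c • x) volume) = ∫⁻ z, g (c • z + v) :=
    lintegral_map (f := fun w => g (w + v)) (hg.comp (measurable_add_const v))
      (measurable_const_smul c)
  rw [← h1, MeasureTheory.Measure.map_addHaar_smul volume hc, hfr,
    lintegral_smul_measure, lintegral_add_right_eq_self (fun w => g w) v, smul_eq_mul]

lemma pw_piece {n : ℕ} (Gi : EuclideanSpace ℝ (Fin n) → ℝ≥0∞) (mGi : Measurable Gi)
    (I2 : Set ℝ) (hμ : volume I2 ≤ 1)
    (c : ℝ → ℝ) (hc : Continuous c) (hcl : ∀ t ∈ I2, 2⁻¹ ≤ c t)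
    (v : ℝ → EuclideanSpace ℝ (Fin n)) (hv : Continuous v) :
    (∫⁻ w, ∫⁻ t in I2, Gi (c t • w + v t)) ≤ ENNReal.ofReal (2 ^ n) * ∫⁻ w, Gi w := by
  have mψ : Measurable (Function.uncurry
      fun (w : EuclideanSpace ℝ (Fin n)) (t : ℝ) => Gi (c t • w + v t)) := by
    apply mGi.comp
    exact (((hc.comp continuous_snd).smul continuous_fst).add
      (hv.comp continuous_snd)).measurable
  rw [lintegral_lintegral_swap mψ.aemeasurable]
  have hbd : ∀ t ∈ I2, (∫⁻ w, Gi (c t • w + v t)) ≤ ENNReal.ofReal (2 ^ n) * ∫⁻ w, Gi w := by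
    intro t ht
    have hct : (0:ℝ) < c t := lt_of_lt_of_le (by norm_num) (hcl t ht)
    rw [pw_lintegral_affine Gi mGi hct.ne' (v t)]
    refine mul_le_mul_left (ENNReal.ofReal_le_ofReal ?_) _
    rw [abs_of_nonneg (inv_nonneg.2 (pow_nonneg hct.le n))]
    have h1 : ((2:ℝ) ^ n)⁻¹ ≤ (c t) ^ n := by
      rw [← inv_pow]; exact pow_le_pow_left₀ (by norm_num) (hcl t ht) n
    calc ((c t) ^ n)⁻¹ ≤ (((2:ℝ) ^ n)⁻¹)⁻¹ := by
          exact inv_anti₀ (by positivity) h1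
      _ = 2 ^ n := inv_inv _
  calc (∫⁻ t in I2, ∫⁻ w, Gi (c t • w + v t))
      ≤ ∫⁻ _ in I2, ENNReal.ofReal (2 ^ n) * ∫⁻ w, Gi w :=
        setLIntegral_mono measurable_const hbd
    _ = (ENNReal.ofReal (2 ^ n) * ∫⁻ w, Gi w) * volume I2 := setLIntegral_const _ _
    _ ≤ (ENNReal.ofReal (2 ^ n) * ∫⁻ w, Gi w) * 1 := mul_le_mul_right hμ _
    _ = _ := mul_one _

variable {n : ℕ}
local notation "E" => EuclideanSpace ℝ (Fin n)

lemma pw_ftc (f : E → ℝ) (hf : ContDiff ℝ 1 f) (y z : E) :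
    f y - f z = ∫ t in (0:ℝ)..1, (fderiv ℝ f (z + t • (y - z))) (y - z) := by
  have hd : ∀ t : ℝ, HasDerivAt (fun s : ℝ => f (z + s • (y - z)))
      ((fderiv ℝ f (z + t • (y - z))) (y - z)) t := by
    intro t
    have h1 : HasDerivAt (fun s : ℝ => z + s • (y - z)) (y - z) t := by
      simpa using ((hasDerivAt_id t).smul_const (y - z)).const_add z
    exact ((hf.differentiable one_ne_zero _).hasFDerivAt.comp_hasDerivAt t h1)
  have hcont : Continuous fun t : ℝ => (fderiv ℝ f (z + t • (y - z))) (y - z) := by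
    have h1 : Continuous fun t : ℝ => z + t • (y - z) := by continuity
    exact (ContinuousLinearMap.apply ℝ ℝ (y - z)).continuous.comp
      ((hf.continuous_fderiv one_ne_zero).comp h1)
  have := intervalIntegral.integral_eq_sub_of_hasDerivAt (f := fun s : ℝ => f (z + s • (y - z)))
    (fun t _ => hd t) (hcont.intervalIntegrable 0 1)
  simpa using this.symm

lemma pw_fderiv_le (f : E → ℝ) (w u : E) :
    |(fderiv ℝ f w) u| ≤ ‖gradient f w‖ * ‖u‖ := by
  have h : ‖gradient f w‖ = ‖fderiv ℝ f w‖ :=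
    (toDual ℝ E).symm.norm_map (fderiv ℝ f w)
  rw [h, ← Real.norm_eq_abs]
  exact (fderiv ℝ f w).le_opNorm u

lemma pw_stepC {n : ℕ} (f : EuclideanSpace ℝ (Fin n) → ℝ) (hf : ContDiff ℝ 1 f) {R : ℝ}
    (hR : 0 < R) {y z : EuclideanSpace ℝ (Fin n)}
    (hy : y ∈ Metric.ball (0 : EuclideanSpace ℝ (Fin n)) R)
    (hz : z ∈ Metric.ball (0 : EuclideanSpace ℝ (Fin n)) R) :
    ENNReal.ofReal ((f y - f z) ^ 2)
      ≤ ENNReal.ofReal (4 * R ^ 2) *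
        ∫⁻ t in Set.Ioc (0:ℝ) 1,
          (Metric.ball (0 : EuclideanSpace ℝ (Fin n)) R).indicator
            (fun w => ENNReal.ofReal (‖gradient f w‖ ^ 2)) ((1 - t) • z + t • y) := by
  set B := Metric.ball (0 : EuclideanSpace ℝ (Fin n)) R with hB
  set Gi := B.indicator (fun w => ENNReal.ofReal (‖gradient f w‖ ^ 2)) with hGi
  set D : ℝ → ℝ := fun t => (fderiv ℝ f (z + t • (y - z))) (y - z) with hD
  have hrew : ∀ t : ℝ, z + t • (y - z) = (1 - t) • z + t • y := by
    intro t; rw [smul_sub, sub_smul, one_smul]; abel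
  have hDcont : Continuous D := by
    have h1 : Continuous fun t : ℝ => z + t • (y - z) := by continuity
    exact (ContinuousLinearMap.apply ℝ ℝ (y - z)).continuous.comp
      ((hf.continuous_fderiv one_ne_zero).comp h1)
  have hgradc : Continuous (gradient f) := by
    have : gradient f = fun x => (toDual ℝ _).symm (fderiv ℝ f x) := rfl
    rw [this]
    exact (LinearIsometryEquiv.continuous _).comp (hf.continuous_fderiv one_ne_zero)
  have mGi : Measurable Gi :=
    Measurable.indicator (by exact ((hgradc.norm.pow 2).measurable).ennreal_ofReal)
      Metric.isOpen_ball.measurableSet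
  have hftc : f y - f z = ∫ t in Set.Ioc (0:ℝ) 1, D t := by
    rw [pw_ftc f hf y z, intervalIntegral.integral_of_le zero_le_one]
  have habs : ENNReal.ofReal |f y - f z| ≤ ∫⁻ t in Set.Ioc (0:ℝ) 1, ENNReal.ofReal |D t| := by
    rw [hftc]
    calc ENNReal.ofReal |∫ t in Set.Ioc (0:ℝ) 1, D t|
        = ‖∫ t in Set.Ioc (0:ℝ) 1, D t‖ₑ := (Real.enorm_eq_ofReal_abs _).symm
      _ ≤ ∫⁻ t in Set.Ioc (0:ℝ) 1, ‖D t‖ₑ := enorm_integral_le_lintegral_enorm _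
      _ = ∫⁻ t in Set.Ioc (0:ℝ) 1, ENNReal.ofReal |D t| :=
          lintegral_congr fun t => Real.enorm_eq_ofReal_abs _
  have hμ1 : ∫⁻ _ in Set.Ioc (0:ℝ) 1, (1:ℝ≥0∞) ≤ 1 := by
    rw [setLIntegral_const, one_mul, Real.volume_Ioc]
    simp
  have hdm : AEMeasurable (fun t => ENNReal.ofReal |D t|) (volume.restrict (Set.Ioc (0:ℝ) 1)) :=
    (hDcont.abs.measurable.ennreal_ofReal).aemeasurable
  have hj := pw_jensen_sq (volume.restrict (Set.Ioc (0:ℝ) 1)) (fun _ => 1)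
    (fun t => ENNReal.ofReal |D t|) aemeasurable_const hdm (by simpa using hμ1)
  simp only [one_mul] at hj
  have step1 : ENNReal.ofReal ((f y - f z) ^ 2)
      ≤ ∫⁻ t in Set.Ioc (0:ℝ) 1, ENNReal.ofReal (D t ^ 2) := by
    calc ENNReal.ofReal ((f y - f z) ^ 2)
        = (ENNReal.ofReal |f y - f z|) ^ (2:ℕ) := by
          rw [← sq_abs, ENNReal.ofReal_pow (abs_nonneg _)]
      _ ≤ (∫⁻ t in Set.Ioc (0:ℝ) 1, ENNReal.ofReal |D t|) ^ (2:ℕ) := pow_le_pow_left' habs 2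
      _ ≤ ∫⁻ t in Set.Ioc (0:ℝ) 1, (ENNReal.ofReal |D t|) ^ (2:ℕ) := hj
      _ = ∫⁻ t in Set.Ioc (0:ℝ) 1, ENNReal.ofReal (D t ^ 2) :=
          lintegral_congr fun t => by rw [← ENNReal.ofReal_pow (abs_nonneg _), sq_abs]
  have hpt : ∀ t ∈ Set.Ioc (0:ℝ) 1,
      ENNReal.ofReal (D t ^ 2) ≤ ENNReal.ofReal (4 * R ^ 2) * Gi ((1 - t) • z + t • y) := by
    intro t ht
    have hmem : (1 - t) • z + t • y ∈ B :=
      convex_ball (0 : EuclideanSpace ℝ (Fin n)) R hz hy (by linarith [ht.2]) ht.1.le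
        (by ring)
    have hyz : ‖y - z‖ ≤ 2 * R := by
      have h1 : ‖y‖ < R := mem_ball_zero_iff.1 hy
      have h2 : ‖z‖ < R := mem_ball_zero_iff.1 hz
      calc ‖y - z‖ ≤ ‖y‖ + ‖z‖ := norm_sub_le _ _
        _ ≤ 2 * R := by linarith
    have hD2 : D t ^ 2 ≤ 4 * R ^ 2 * ‖gradient f (z + t • (y - z))‖ ^ 2 := by
      have h1 : |D t| ≤ ‖gradient f (z + t • (y - z))‖ * ‖y - z‖ := pw_fderiv_le f _ _
      have h2 : |D t| ≤ ‖gradient f (z + t • (y - z))‖ * (2 * R) := by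
        refine h1.trans (mul_le_mul_of_nonneg_left hyz (norm_nonneg _))
      calc D t ^ 2 = |D t| ^ 2 := (sq_abs _).symm
        _ ≤ (‖gradient f (z + t • (y - z))‖ * (2 * R)) ^ 2 := by
            exact pow_le_pow_left₀ (abs_nonneg _) h2 2
        _ = 4 * R ^ 2 * ‖gradient f (z + t • (y - z))‖ ^ 2 := by ring
    calc ENNReal.ofReal (D t ^ 2)
        ≤ ENNReal.ofReal (4 * R ^ 2 * ‖gradient f (z + t • (y - z))‖ ^ 2) :=
          ENNReal.ofReal_le_ofReal hD2
      _ = ENNReal.ofReal (4 * R ^ 2) * ENNReal.ofReal (‖gradient f (z + t • (y - z))‖ ^ 2) :=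
          ENNReal.ofReal_mul (by positivity)
      _ = ENNReal.ofReal (4 * R ^ 2) * Gi ((1 - t) • z + t • y) := by
          rw [hrew t, hGi, Set.indicator_of_mem hmem]
  calc ENNReal.ofReal ((f y - f z) ^ 2)
      ≤ ∫⁻ t in Set.Ioc (0:ℝ) 1, ENNReal.ofReal (D t ^ 2) := step1
    _ ≤ ∫⁻ t in Set.Ioc (0:ℝ) 1, ENNReal.ofReal (4 * R ^ 2) * Gi ((1 - t) • z + t • y) := by
        have mγ : Measurable fun t : ℝ => (1 - t) • z + t • y := by
          have hcg : Continuous fun t : ℝ => (1 - t) • z + t • y :=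
            ((continuous_const.sub continuous_id).smul continuous_const).add
              (continuous_id.smul continuous_const)
          exact hcg.measurable
        exact setLIntegral_mono (measurable_const.mul (mGi.comp mγ)) hpt
    _ = ENNReal.ofReal (4 * R ^ 2) *
        ∫⁻ t in Set.Ioc (0:ℝ) 1, Gi ((1 - t) • z + t • y) :=
          lintegral_const_mul' _ _ ENNReal.ofReal_ne_top

set_option maxHeartbeats 1000000 in
/-- Poincaré inequality with the mean value replaced by a weighted average against the
rescaled cutoff `φ_R(y) = R^{-n} φ(y/R)`. -/
theorem poincare_weighted_average {n : ℕ} (hn : 1 ≤ n)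
    (φ : EuclideanSpace ℝ (Fin n) → ℝ)
    (hφc : Continuous φ) (hφ0 : ∀ x, 0 ≤ φ x)
    (hφsupp : Function.support φ ⊆ Metric.closedBall 0 1)
    (hφint : ∫ x, φ x = 1) :
    ∃ C > 0, ∀ R > 0, ∀ f : EuclideanSpace ℝ (Fin n) → ℝ, ContDiff ℝ 1 f →
      (∫ y in Metric.ball (0 : EuclideanSpace ℝ (Fin n)) R,
          |f y - ∫ z in Metric.ball (0 : EuclideanSpace ℝ (Fin n)) R,
              (R ^ n)⁻¹ * φ (R⁻¹ • z) * f z| ^ 2)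
        ≤ C * R ^ 2 *
          ∫ y in Metric.ball (0 : EuclideanSpace ℝ (Fin n)) R, ‖gradient f y‖ ^ 2 := by
  have hE : Module.finrank ℝ (EuclideanSpace ℝ (Fin n)) = n := finrank_euclideanSpace_fin
  haveI : Nonempty (Fin n) := ⟨⟨0, hn⟩⟩
  haveI : Nontrivial (EuclideanSpace ℝ (Fin n)) := by
    have h1 : 0 < Module.finrank ℝ (EuclideanSpace ℝ (Fin n)) := by omega
    exact Module.nontrivial_of_finrank_pos h1
  -- bound for φ
  have hφcs : HasCompactSupport φ :=
    HasCompactSupport.intro (isCompact_closedBall _ _) fun x hx => by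
      by_contra h
      exact hx (hφsupp (Function.mem_support.2 h))
  obtain ⟨x₀, hx₀⟩ := hφc.exists_forall_ge_of_hasCompactSupport hφcs
  set M : ℝ := max (φ x₀) 1 with hMdef
  have hM1 : (1:ℝ) ≤ M := le_max_right _ _
  have hM0 : (0:ℝ) < M := lt_of_lt_of_le one_pos hM1
  have hMb : ∀ x, φ x ≤ M := fun x => (hx₀ x).trans (le_max_left _ _)
  set κ : ℝ := (volume (Metric.ball (0 : EuclideanSpace ℝ (Fin n)) 1)).toReal with hκdef
  have hκ0 : 0 ≤ κ := ENNReal.toReal_nonneg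
  refine ⟨4 * 2 ^ n * (M * κ + 1), by positivity, ?_⟩
  intro R hR f hf
  set B := Metric.ball (0 : EuclideanSpace ℝ (Fin n)) R with hBdef
  set ψ : EuclideanSpace ℝ (Fin n) → ℝ := fun z => (R ^ n)⁻¹ * φ (R⁻¹ • z) with hψdef
  have hRn : (0:ℝ) < R ^ n := pow_pos hR n
  have hψc : Continuous ψ := continuous_const.mul (hφc.comp (continuous_const_smul _))
  have hψ0 : ∀ z, 0 ≤ ψ z := fun z => mul_nonneg (inv_nonneg.2 hRn.le) (hφ0 _)
  have hψz : ∀ z ∉ Metric.closedBall (0 : EuclideanSpace ℝ (Fin n)) R, ψ z = 0 := by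
    intro z hz
    have h1 : R < ‖z‖ := by
      simpa [Metric.mem_closedBall, dist_zero_right] using hz
    have h2 : (1:ℝ) < ‖R⁻¹ • z‖ := by
      rw [norm_smul, Real.norm_eq_abs, abs_of_nonneg (inv_nonneg.2 hR.le)]
      rw [← inv_mul_cancel₀ hR.ne']
      exact mul_lt_mul_of_pos_left h1 (inv_pos.2 hR)
    have h3 : R⁻¹ • z ∉ Metric.closedBall (0 : EuclideanSpace ℝ (Fin n)) 1 := by
      simp [Metric.mem_closedBall, dist_zero_right]
      linarith
    have h4 : φ (R⁻¹ • z) = 0 := by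
      by_contra h
      exact h3 (hφsupp (Function.mem_support.2 h))
    simp [hψdef, h4]
  have hfc : Continuous f := hf.continuous
  have hgradc : Continuous (gradient f) := by
    have h : gradient f = fun x => (toDual ℝ _).symm (fderiv ℝ f x) := rfl
    rw [h]
    exact (LinearIsometryEquiv.continuous _).comp (hf.continuous_fderiv one_ne_zero)
  -- integrability on B
  have hIcomp : ∀ g : EuclideanSpace ℝ (Fin n) → ℝ, Continuous g → IntegrableOn g B volume := by
    intro g hg
    exact (hg.continuousOn.integrableOn_compact (isCompact_closedBall _ _)).mono_set
      Metric.ball_subset_closedBall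
  have hIψ : IntegrableOn ψ B volume := hIcomp ψ hψc
  have hIψf : IntegrableOn (fun z => ψ z * f z) B volume := hIcomp _ (hψc.mul hfc)
  have hIG : IntegrableOn (fun y => ‖gradient f y‖ ^ 2) B volume :=
    hIcomp _ (hgradc.norm.pow 2)
  -- ball ae closedBall
  have hballae : (B : Set (EuclideanSpace ℝ (Fin n))) =ᵐ[volume]
      Metric.closedBall (0 : EuclideanSpace ℝ (Fin n)) R := by
    refine ae_eq_set.2 ⟨?_, ?_⟩
    · rw [Set.diff_eq_empty.2 Metric.ball_subset_closedBall]; simp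
    · rw [Metric.closedBall_diff_ball]
      exact Measure.addHaar_sphere volume 0 R
  -- ∫ ψ over B is 1
  have hψint : ∫ z in B, ψ z = 1 := by
    have hglobal : ∫ z, ψ z = 1 := by
      have h1 : ∫ z, ψ z = (R ^ n)⁻¹ * ∫ z, φ (R⁻¹ • z) := by
        simp only [hψdef]
        exact integral_const_mul _ _
      have h2 : ∫ z, φ (R⁻¹ • z) = R ^ n • ∫ x, φ x := by
        have := MeasureTheory.Measure.integral_comp_inv_smul_of_nonneg
          (volume : Measure (EuclideanSpace ℝ (Fin n))) φ hR.le
        rwa [hE] at this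
      rw [h1, h2, hφint, smul_eq_mul, mul_one, inv_mul_cancel₀ hRn.ne']
    have hcb : ∫ z in Metric.closedBall (0 : EuclideanSpace ℝ (Fin n)) R, ψ z = ∫ z, ψ z :=
      setIntegral_eq_integral_of_forall_compl_eq_zero fun z hz => hψz z hz
    rw [setIntegral_congr_set hballae, hcb, hglobal]
  -- ennreal setup
  set a : EuclideanSpace ℝ (Fin n) → ℝ≥0∞ := fun z => ENNReal.ofReal (ψ z) with hadef
  set G : EuclideanSpace ℝ (Fin n) → ℝ≥0∞ :=
    fun w => ENNReal.ofReal (‖gradient f w‖ ^ 2) with hGdef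
  set Gi : EuclideanSpace ℝ (Fin n) → ℝ≥0∞ := B.indicator G with hGidef
  have mG : Measurable G := ((hgradc.norm.pow 2).measurable).ennreal_ofReal
  have mGi : Measurable Gi := mG.indicator Metric.isOpen_ball.measurableSet
  have mA : Measurable a := hψc.measurable.ennreal_ofReal
  set I := ∫⁻ w, Gi w with hIdef
  have hIeq : I = ∫⁻ y in B, G y := lintegral_indicator Metric.isOpen_ball.measurableSet G
  have hIofReal : ENNReal.ofReal (∫ y in B, ‖gradient f y‖ ^ 2) = I := by
    rw [hIeq]
    exact ofReal_integral_eq_lintegral_ofReal hIG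
      (Filter.Eventually.of_forall fun y => by positivity)
  have hIfin : I ≠ ⊤ := by rw [← hIofReal]; exact ENNReal.ofReal_ne_top
  have haint : ∫⁻ z in B, a z = 1 := by
    rw [hadef, ← ofReal_integral_eq_lintegral_ofReal hIψ
      (Filter.Eventually.of_forall hψ0), hψint, ENNReal.ofReal_one]
  set fst : ℝ := ∫ z in B, ψ z * f z with hfstdef
  set K : EuclideanSpace ℝ (Fin n) → EuclideanSpace ℝ (Fin n) → ℝ≥0∞ :=
    fun y z => ∫⁻ t in Set.Ioc (0:ℝ) 1, Gi ((1 - t) • z + t • y) with hKdef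
  set K1 : EuclideanSpace ℝ (Fin n) → EuclideanSpace ℝ (Fin n) → ℝ≥0∞ :=
    fun y z => ∫⁻ t in Set.Ioc (0:ℝ) 2⁻¹, Gi ((1 - t) • z + t • y) with hK1def
  set K2 : EuclideanSpace ℝ (Fin n) → EuclideanSpace ℝ (Fin n) → ℝ≥0∞ :=
    fun y z => ∫⁻ t in Set.Ioc (2⁻¹:ℝ) 1, Gi ((1 - t) • z + t • y) with hK2def
  -- measurability infrastructure
  have mγ2 : Measurable fun q : (EuclideanSpace ℝ (Fin n) × EuclideanSpace ℝ (Fin n)) × ℝ =>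
      Gi ((1 - q.2) • q.1.2 + q.2 • q.1.1) := by
    apply mGi.comp
    exact (((continuous_const.sub continuous_snd).smul (continuous_snd.comp continuous_fst)).add
      (continuous_snd.smul (continuous_fst.comp continuous_fst))).measurable
  have mKgen : ∀ s : Set ℝ, Measurable fun p : EuclideanSpace ℝ (Fin n) × EuclideanSpace ℝ (Fin n)
      => ∫⁻ t in s, Gi ((1 - t) • p.2 + t • p.1) := fun s =>
    Measurable.lintegral_prod_right
      (f := fun (p : EuclideanSpace ℝ (Fin n) × EuclideanSpace ℝ (Fin n)) (t : ℝ) =>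
        Gi ((1 - t) • p.2 + t • p.1)) mγ2
  -- combine step B and step C
  have hstepBC : ∀ y ∈ B,
      ENNReal.ofReal (|f y - fst| ^ 2)
        ≤ ENNReal.ofReal (4 * R ^ 2) * ∫⁻ z in B, a z * K y z := by
    intro y hy
    have h1 : ENNReal.ofReal (|f y - fst| ^ 2)
        ≤ ∫⁻ z in B, a z * ENNReal.ofReal ((f y - f z) ^ 2) := by
      rw [sq_abs]
      exact pw_stepB (volume.restrict B) ψ f hψ0 hIψ hIψf hψint
        hfc.measurable.aemeasurable (f y)
    refine h1.trans ?_
    have h2 : ∀ z ∈ B, a z * ENNReal.ofReal ((f y - f z) ^ 2)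
        ≤ ENNReal.ofReal (4 * R ^ 2) * (a z * K y z) := by
      intro z hz
      calc a z * ENNReal.ofReal ((f y - f z) ^ 2)
          ≤ a z * (ENNReal.ofReal (4 * R ^ 2) * K y z) :=
            mul_le_mul_right (pw_stepC f hf hR hy hz) _
        _ = ENNReal.ofReal (4 * R ^ 2) * (a z * K y z) := by ring
    calc (∫⁻ z in B, a z * ENNReal.ofReal ((f y - f z) ^ 2))
        ≤ ∫⁻ z in B, ENNReal.ofReal (4 * R ^ 2) * (a z * K y z) := by
          refine setLIntegral_mono ?_ h2
          have m1 : Measurable (Function.uncurry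
              fun (z : EuclideanSpace ℝ (Fin n)) (t : ℝ) => Gi ((1 - t) • z + t • y)) :=
            mGi.comp (((continuous_const.sub continuous_snd).smul continuous_fst).add
              (continuous_snd.smul continuous_const)).measurable
          have m2 : Measurable fun z => K y z := by
            simp only [hKdef]; exact Measurable.lintegral_prod_right m1
          exact measurable_const.mul (mA.mul m2)
      _ = ENNReal.ofReal (4 * R ^ 2) * ∫⁻ z in B, a z * K y z :=
          lintegral_const_mul' _ _ ENNReal.ofReal_ne_top
  set L := ∫⁻ y in B, ENNReal.ofReal (|f y - fst| ^ 2) with hLdef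
  have hLbound : L ≤ ENNReal.ofReal (4 * R ^ 2) * ∫⁻ y in B, ∫⁻ z in B, a z * K y z := by
    have mT : Measurable fun y => ∫⁻ z in B, a z * K y z := by
      simp only [hKdef]
      exact Measurable.lintegral_prod_right ((mA.comp measurable_snd).mul (mKgen (Set.Ioc 0 1)))
    calc L ≤ ∫⁻ y in B, ENNReal.ofReal (4 * R ^ 2) * ∫⁻ z in B, a z * K y z :=
        setLIntegral_mono (measurable_const.mul mT) hstepBC
      _ = ENNReal.ofReal (4 * R ^ 2) * ∫⁻ y in B, ∫⁻ z in B, a z * K y z :=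
        lintegral_const_mul' _ _ ENNReal.ofReal_ne_top
  -- split the t-integral
  have hKsplit : ∀ y z, K y z = K1 y z + K2 y z := by
    intro y z
    have hu : Set.Ioc (0:ℝ) 1 = Set.Ioc (0:ℝ) 2⁻¹ ∪ Set.Ioc (2⁻¹:ℝ) 1 :=
      (Set.Ioc_union_Ioc_eq_Ioc (by norm_num) (by norm_num)).symm
    simp only [hKdef, hK1def, hK2def, hu]
    exact lintegral_union measurableSet_Ioc (Set.Ioc_disjoint_Ioc_of_le le_rfl)
  have mT1y : ∀ y, Measurable fun z => a z * K1 y z := by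
    intro y
    have m1 : Measurable (Function.uncurry
        fun (z : EuclideanSpace ℝ (Fin n)) (t : ℝ) => Gi ((1 - t) • z + t • y)) :=
      mGi.comp (((continuous_const.sub continuous_snd).smul continuous_fst).add
        (continuous_snd.smul continuous_const)).measurable
    have m2 : Measurable fun z => K1 y z := by
      simp only [hK1def]; exact Measurable.lintegral_prod_right m1
    exact mA.mul m2
  have mT1 : Measurable fun y => ∫⁻ z in B, a z * K1 y z := by
    simp only [hK1def]
    exact Measurable.lintegral_prod_right ((mA.comp measurable_snd).mul (mKgen (Set.Ioc 0 2⁻¹)))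
  have hTsplit : (∫⁻ y in B, ∫⁻ z in B, a z * K y z)
      = (∫⁻ y in B, ∫⁻ z in B, a z * K1 y z) + (∫⁻ y in B, ∫⁻ z in B, a z * K2 y z) := by
    have h1 : ∀ y, (∫⁻ z in B, a z * K y z)
        = (∫⁻ z in B, a z * K1 y z) + (∫⁻ z in B, a z * K2 y z) := by
      intro y
      rw [← lintegral_add_left (mT1y y)]
      exact lintegral_congr fun z => by rw [hKsplit y z, mul_add]
    calc (∫⁻ y in B, ∫⁻ z in B, a z * K y z)
        = ∫⁻ y in B, ((∫⁻ z in B, a z * K1 y z) + (∫⁻ z in B, a z * K2 y z)) :=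
          lintegral_congr h1
      _ = _ := lintegral_add_left mT1 _
  -- bound T1
  have hT1 : (∫⁻ y in B, ∫⁻ z in B, a z * K1 y z) ≤ ENNReal.ofReal (M * 2 ^ n * κ) * I := by
    have hzb : ∀ y, (∫⁻ z in B, a z * K1 y z)
        ≤ ENNReal.ofReal ((R ^ n)⁻¹ * M) * (ENNReal.ofReal (2 ^ n) * I) := by
      intro y
      have h1 : ∀ z, a z * K1 y z ≤ ENNReal.ofReal ((R ^ n)⁻¹ * M) * K1 y z := by
        intro z
        refine mul_le_mul_left ?_ _
        refine ENNReal.ofReal_le_ofReal ?_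
        rw [hψdef]
        exact mul_le_mul_of_nonneg_left (hMb _) (inv_nonneg.2 hRn.le)
      have hpiece : (∫⁻ z, K1 y z) ≤ ENNReal.ofReal (2 ^ n) * I := by
        simp only [hK1def]
        refine pw_piece Gi mGi (Set.Ioc (0:ℝ) 2⁻¹) ?_ (fun t => 1 - t)
          (continuous_const.sub continuous_id) (fun t ht => by
            simp only [Set.mem_Ioc] at ht; linarith [ht.2]) (fun t => t • y)
          (continuous_id.smul continuous_const)
        rw [Real.volume_Ioc]
        apply ENNReal.ofReal_le_one.2
        norm_num
      calc (∫⁻ z in B, a z * K1 y z)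
          ≤ ∫⁻ z in B, ENNReal.ofReal ((R ^ n)⁻¹ * M) * K1 y z := lintegral_mono fun z => h1 z
        _ = ENNReal.ofReal ((R ^ n)⁻¹ * M) * ∫⁻ z in B, K1 y z :=
            lintegral_const_mul' _ _ ENNReal.ofReal_ne_top
        _ ≤ ENNReal.ofReal ((R ^ n)⁻¹ * M) * ∫⁻ z, K1 y z :=
            mul_le_mul_right (setLIntegral_le_lintegral _ _) _
        _ ≤ ENNReal.ofReal ((R ^ n)⁻¹ * M) * (ENNReal.ofReal (2 ^ n) * I) :=
            mul_le_mul_right hpiece _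
    have hvolB : volume B = ENNReal.ofReal (R ^ n) * ENNReal.ofReal κ := by
      rw [hBdef, Measure.addHaar_ball volume (0 : EuclideanSpace ℝ (Fin n)) hR.le, hE, hκdef,
        ENNReal.ofReal_toReal measure_ball_lt_top.ne]
    calc (∫⁻ y in B, ∫⁻ z in B, a z * K1 y z)
        ≤ ∫⁻ _ in B, ENNReal.ofReal ((R ^ n)⁻¹ * M) * (ENNReal.ofReal (2 ^ n) * I) :=
          lintegral_mono fun y => hzb y
      _ = ENNReal.ofReal ((R ^ n)⁻¹ * M) * (ENNReal.ofReal (2 ^ n) * I) * volume B :=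
          setLIntegral_const _ _
      _ = ENNReal.ofReal ((R ^ n)⁻¹ * M) * (ENNReal.ofReal (2 ^ n) * I)
            * (ENNReal.ofReal (R ^ n) * ENNReal.ofReal κ) := by rw [hvolB]
      _ = (ENNReal.ofReal ((R ^ n)⁻¹ * M) * ENNReal.ofReal (2 ^ n)
            * ENNReal.ofReal (R ^ n) * ENNReal.ofReal κ) * I := by ring
      _ = ENNReal.ofReal (M * 2 ^ n * κ) * I := by
          rw [← ENNReal.ofReal_mul (by positivity), ← ENNReal.ofReal_mul (by positivity),
            ← ENNReal.ofReal_mul (by positivity)]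
          congr 1
          field_simp
  -- bound T2
  have hT2 : (∫⁻ y in B, ∫⁻ z in B, a z * K2 y z) ≤ ENNReal.ofReal (2 ^ n) * I := by
    have h0 : (∫⁻ y in B, ∫⁻ z in B, a z * K2 y z) ≤ ∫⁻ y, ∫⁻ z in B, a z * K2 y z :=
      setLIntegral_le_lintegral _ _
    have hswap : (∫⁻ y, ∫⁻ z in B, a z * K2 y z) = ∫⁻ z in B, ∫⁻ y, a z * K2 y z := by
      refine lintegral_lintegral_swap ?_
      simp only [hK2def]
      exact (((mA.comp measurable_snd).mul (mKgen (Set.Ioc 2⁻¹ 1)))).aemeasurable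
    have hy2 : ∀ z, (∫⁻ y, K2 y z) ≤ ENNReal.ofReal (2 ^ n) * I := by
      intro z
      have hrw : (∫⁻ y, K2 y z)
          = ∫⁻ y, ∫⁻ t in Set.Ioc (2⁻¹:ℝ) 1, Gi (t • y + (1 - t) • z) := by
        simp only [hK2def]
        exact lintegral_congr fun y => lintegral_congr fun t => by rw [add_comm]
      rw [hrw]
      refine pw_piece Gi mGi (Set.Ioc (2⁻¹:ℝ) 1) ?_ (fun t => t) continuous_id
        (fun t ht => ht.1.le) (fun t => (1 - t) • z)
        ((continuous_const.sub continuous_id).smul continuous_const)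
      rw [Real.volume_Ioc]
      apply ENNReal.ofReal_le_one.2
      norm_num
    have h2 : (∫⁻ z in B, ∫⁻ y, a z * K2 y z) ≤ ENNReal.ofReal (2 ^ n) * I := by
      have hc : ∀ z, (∫⁻ y, a z * K2 y z) = a z * ∫⁻ y, K2 y z := fun z =>
        lintegral_const_mul' _ _ ENNReal.ofReal_ne_top
      calc (∫⁻ z in B, ∫⁻ y, a z * K2 y z)
          = ∫⁻ z in B, a z * ∫⁻ y, K2 y z := lintegral_congr hc
        _ ≤ ∫⁻ z in B, a z * (ENNReal.ofReal (2 ^ n) * I) :=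
            lintegral_mono fun z => mul_le_mul_right (hy2 z) _
        _ = (∫⁻ z in B, a z) * (ENNReal.ofReal (2 ^ n) * I) :=
            lintegral_mul_const' _ _ (ENNReal.mul_ne_top ENNReal.ofReal_ne_top hIfin)
        _ = ENNReal.ofReal (2 ^ n) * I := by rw [haint, one_mul]
    exact h0.trans (hswap.le.trans h2)
  -- final ennreal bound
  have hfinal : L ≤ ENNReal.ofReal (4 * 2 ^ n * (M * κ + 1) * R ^ 2) * I := by
    calc L ≤ ENNReal.ofReal (4 * R ^ 2) * ∫⁻ y in B, ∫⁻ z in B, a z * K y z := hLbound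
      _ = ENNReal.ofReal (4 * R ^ 2) *
          ((∫⁻ y in B, ∫⁻ z in B, a z * K1 y z) + (∫⁻ y in B, ∫⁻ z in B, a z * K2 y z)) := by
            rw [hTsplit]
      _ ≤ ENNReal.ofReal (4 * R ^ 2) *
          (ENNReal.ofReal (M * 2 ^ n * κ) * I + ENNReal.ofReal (2 ^ n) * I) :=
            mul_le_mul_right (add_le_add hT1 hT2) _
      _ = (ENNReal.ofReal (4 * R ^ 2) *
          (ENNReal.ofReal (M * 2 ^ n * κ) + ENNReal.ofReal (2 ^ n))) * I := by ring
      _ = ENNReal.ofReal (4 * 2 ^ n * (M * κ + 1) * R ^ 2) * I := by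
          rw [← ENNReal.ofReal_add (by positivity) (by positivity),
            ← ENNReal.ofReal_mul (by positivity)]
          congr 1
          ring
  -- endgame
  have hIsq : IntegrableOn (fun y => |f y - fst| ^ 2) B volume :=
    hIcomp _ (((hfc.sub continuous_const).abs).pow 2)
  have hLreal : ENNReal.ofReal (∫ y in B, |f y - fst| ^ 2) = L := by
    rw [hLdef]
    exact ofReal_integral_eq_lintegral_ofReal hIsq
      (Filter.Eventually.of_forall fun y => by positivity)
  have hRHS0 : 0 ≤ ∫ y in B, ‖gradient f y‖ ^ 2 :=
    integral_nonneg fun y => by positivity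
  refine (ENNReal.ofReal_le_ofReal_iff (by positivity)).1 ?_
  calc ENNReal.ofReal (∫ y in B, |f y - fst| ^ 2) = L := hLreal
    _ ≤ ENNReal.ofReal (4 * 2 ^ n * (M * κ + 1) * R ^ 2) * I := hfinal
    _ = ENNReal.ofReal (4 * 2 ^ n * (M * κ + 1) * R ^ 2) *
        ENNReal.ofReal (∫ y in B, ‖gradient f y‖ ^ 2) := by rw [hIofReal]
    _ = ENNReal.ofReal (4 * 2 ^ n * (M * κ + 1) * R ^ 2 * ∫ y in B, ‖gradient f y‖ ^ 2) :=
        (ENNReal.ofReal_mul (by positivity)).symm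
end

section
/- Let Λ ≥ 1 and δ ≥ 0. Let g : ℝⁿ → Mₙ(ℝ) be a map such that for all x, y: g(x) is invertible, ‖g(x)‖ ≤ Λ, ‖g(x)⁻¹‖ ≤ Λ, and ‖g(x) - g(y)‖ ≤ δ·‖x - y‖. Let J : ℝⁿ → Mₙ(ℝ) be measurable with ‖J(y)‖ ≤ 1 for all y and J(y) + g(y)·J(y)ᵀ·g(y)⁻¹ = 0 for almost every y. Let φ : ℝⁿ → ℝ be continuous, nonnegative, supported in the closed unit ball with ∫φ = 1, and for ρ > 0 set J_ρ(x) = ∫ φ(z) J(x + ρz) dz. Then for every x, ‖J_ρ(x) + g(x)·J_ρ(x)ᵀ·g(x)⁻¹‖ ≤ (Λ + Λ³)·δ·ρ. -/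
open Matrix MeasureTheory
open scoped Matrix.Norms.L2Operator

set_option maxHeartbeats 1000000 in
/-- Local averages of a `g`-compatible field of matrices are almost `g`-compatible, with
error controlled by the modulus of continuity of `g` and the averaging radius `ρ`. -/
theorem mollified_almost_g_compatible {n : ℕ}
    (Λ δ : ℝ) (hΛ : 1 ≤ Λ) (hδ : 0 ≤ δ)
    (g : (Fin n → ℝ) → Matrix (Fin n) (Fin n) ℝ)
    (hginv : ∀ x, IsUnit (g x))
    (hgΛ : ∀ x, ‖g x‖ ≤ Λ)
    (hginvΛ : ∀ x, ‖(g x)⁻¹‖ ≤ Λ)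
    (hglip : ∀ x y, ‖g x - g y‖ ≤ δ * ‖x - y‖)
    (J : (Fin n → ℝ) → Matrix (Fin n) (Fin n) ℝ)
    (hJmeas : ∀ i j : Fin n, Measurable fun y => J y i j)
    (hJbd : ∀ y, ‖J y‖ ≤ 1)
    (hJcompat : ∀ᵐ y : Fin n → ℝ, J y + g y * (J y)ᵀ * (g y)⁻¹ = 0)
    (φ : (Fin n → ℝ) → ℝ)
    (hφc : Continuous φ) (hφ0 : ∀ x, 0 ≤ φ x)
    (hφsupp : Function.support φ ⊆ Metric.closedBall 0 1)
    (hφint : ∫ x, φ x = 1)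
    (ρ : ℝ) (hρ : 0 < ρ) :
    ∀ x : Fin n → ℝ,
      ‖(∫ z : Fin n → ℝ, φ z • J (x + ρ • z)) +
          g x * (∫ z : Fin n → ℝ, φ z • J (x + ρ • z))ᵀ * (g x)⁻¹‖
        ≤ (Λ + Λ ^ 3) * δ * ρ := by
  intro x
  have hΛ0 : (0:ℝ) ≤ Λ := zero_le_one.trans hΛ
  set T : (Fin n → ℝ) → (Fin n → ℝ) := fun z => x + ρ • z with hTdef
  have hTm : Measurable T := by fun_prop
  -- quasi measure preserving
  have hTqmp : Measure.QuasiMeasurePreserving T volume volume := by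
    have h1 : Measure.QuasiMeasurePreserving (fun z : Fin n → ℝ => ρ • z) volume volume :=
      Measure.quasiMeasurePreserving_smul volume hρ.ne'
    have h2 := (measurePreserving_add_left (volume : Measure (Fin n → ℝ)) x).quasiMeasurePreserving
    exact h2.comp h1
  have hcomp : ∀ᵐ z : Fin n → ℝ, J (T z) + g (T z) * (J (T z))ᵀ * (g (T z))⁻¹ = 0 :=
    hTqmp.ae hJcompat
  -- integrability of φ
  have hφcs : HasCompactSupport φ :=
    HasCompactSupport.intro (isCompact_closedBall (0 : Fin n → ℝ) 1)
      (fun z hz => by by_contra h; exact hz (hφsupp h))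
  have hφint' : Integrable φ := hφc.integrable_of_hasCompactSupport hφcs
  -- measurability of the integrand
  letI : MeasurableSpace (Matrix (Fin n) (Fin n) ℝ) :=
    inferInstanceAs (MeasurableSpace (Fin n → Fin n → ℝ))
  haveI : BorelSpace (Matrix (Fin n) (Fin n) ℝ) :=
    ⟨(inferInstance : BorelSpace (Fin n → Fin n → ℝ)).measurable_eq⟩
  have hmeasf : AEStronglyMeasurable (fun z => φ z • J (T z)) volume := by
    have : Measurable (fun z => φ z • J (T z)) := by
      apply measurable_pi_lambda; intro i; apply measurable_pi_lambda; intro j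
      simp only [Matrix.smul_apply, smul_eq_mul]
      exact hφc.measurable.mul ((hJmeas i j).comp hTm)
    exact this.aestronglyMeasurable
  have hfint : Integrable (fun z => φ z • J (T z)) := by
    refine hφint'.mono' hmeasf ?_
    filter_upwards with z
    rw [norm_smul, Real.norm_eq_abs, abs_of_nonneg (hφ0 z)]
    calc φ z * ‖J (T z)‖ ≤ φ z * 1 := by gcongr; exacts [hφ0 z, hJbd _]
      _ = φ z := mul_one _
  -- the compatibility defect as a continuous linear map
  let Lm : Matrix (Fin n) (Fin n) ℝ →ₗ[ℝ] Matrix (Fin n) (Fin n) ℝ :=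
    { toFun := fun M => M + g x * Mᵀ * (g x)⁻¹
      map_add' := fun M N => by
        simp only [Matrix.transpose_add, Matrix.mul_add, Matrix.add_mul]
        abel
      map_smul' := fun c M => by
        simp only [Matrix.transpose_smul, Matrix.mul_smul, Matrix.smul_mul,
          RingHom.id_apply, smul_add] }
  let L := Lm.toContinuousLinearMap
  have key : (∫ z : Fin n → ℝ, φ z • J (T z)) +
      g x * (∫ z : Fin n → ℝ, φ z • J (T z))ᵀ * (g x)⁻¹
      = ∫ z : Fin n → ℝ, φ z • (J (T z) + g x * (J (T z))ᵀ * (g x)⁻¹) := by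
    calc (∫ z : Fin n → ℝ, φ z • J (T z)) +
        g x * (∫ z : Fin n → ℝ, φ z • J (T z))ᵀ * (g x)⁻¹
        = L (∫ z : Fin n → ℝ, φ z • J (T z)) := rfl
      _ = ∫ z : Fin n → ℝ, L (φ z • J (T z)) := (L.integral_comp_comm hfint).symm
      _ = _ := by
          congr 1; funext z
          show φ z • J (T z) + g x * (φ z • J (T z))ᵀ * (g x)⁻¹ = _
          rw [Matrix.transpose_smul, smul_add]
          congr 1
          simp [Matrix.mul_smul, Matrix.smul_mul]
  rw [key]
  have hb : ∀ᵐ z : Fin n → ℝ,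
      ‖φ z • (J (T z) + g x * (J (T z))ᵀ * (g x)⁻¹)‖ ≤ φ z * ((Λ + Λ ^ 3) * δ * ρ) := by
    filter_upwards [hcomp] with z hz
    rcases eq_or_ne (φ z) 0 with h0 | h0
    · simp [h0]
    · have hz1 : ‖z‖ ≤ 1 := by
        have := hφsupp (Function.mem_support.mpr h0)
        simpa [Metric.mem_closedBall, dist_zero_right] using this
      set y := T z with hy
      have hxy : ‖x - y‖ ≤ ρ := by
        have : x - y = -(ρ • z) := by simp [hy, hTdef]
        rw [this, norm_neg, norm_smul, Real.norm_eq_abs, abs_of_pos hρ]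
        calc ρ * ‖z‖ ≤ ρ * 1 := by gcongr
          _ = ρ := mul_one _
      set K := (J y)ᵀ with hK
      have hKbd : ‖K‖ ≤ 1 := by
        rw [hK, ← conjTranspose_eq_transpose_of_trivial, Matrix.l2_opNorm_conjTranspose]
        exact hJbd y
      have hgy : J y = -(g y * K * (g y)⁻¹) := eq_neg_of_add_eq_zero_left hz
      have hx1 : (g x)⁻¹ * g x = 1 :=
        Matrix.nonsing_inv_mul _ ((Matrix.isUnit_iff_isUnit_det _).mp (hginv x))
      have hy1 : g y * (g y)⁻¹ = 1 :=
        Matrix.mul_nonsing_inv _ ((Matrix.isUnit_iff_isUnit_det _).mp (hginv y))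
      have hdiff : (g x)⁻¹ - (g y)⁻¹ = (g x)⁻¹ * (g y - g x) * (g y)⁻¹ := by
        have h : (g x)⁻¹ * (g y - g x) * (g y)⁻¹
            = (g x)⁻¹ * (g y * (g y)⁻¹) - ((g x)⁻¹ * g x) * (g y)⁻¹ := by noncomm_ring
        rw [h, hy1, hx1, mul_one, one_mul]
      have hsplit : J y + g x * K * (g x)⁻¹
          = (g x - g y) * K * (g x)⁻¹ + (g y * K) * ((g x)⁻¹ - (g y)⁻¹) := by
        rw [hgy]; noncomm_ring
      have hnorm1 : ‖(g x - g y) * K * (g x)⁻¹‖ ≤ Λ * δ * ρ := by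
        calc ‖(g x - g y) * K * (g x)⁻¹‖ ≤ ‖(g x - g y) * K‖ * ‖(g x)⁻¹‖ := norm_mul_le _ _
          _ ≤ ‖g x - g y‖ * ‖K‖ * ‖(g x)⁻¹‖ := by gcongr; exact norm_mul_le _ _
          _ ≤ (δ * ρ) * 1 * Λ := by
              have h1 : ‖g x - g y‖ ≤ δ * ρ :=
                (hglip x y).trans (mul_le_mul_of_nonneg_left hxy hδ)
              exact mul_le_mul (mul_le_mul h1 hKbd (norm_nonneg _) (by positivity))
                (hginvΛ x) (norm_nonneg _) (by positivity)
          _ = Λ * δ * ρ := by ring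
      have hnorm2 : ‖(g y * K) * ((g x)⁻¹ - (g y)⁻¹)‖ ≤ Λ ^ 3 * δ * ρ := by
        have hd : ‖(g x)⁻¹ - (g y)⁻¹‖ ≤ Λ * (δ * ρ) * Λ := by
          rw [hdiff]
          calc ‖(g x)⁻¹ * (g y - g x) * (g y)⁻¹‖
              ≤ ‖(g x)⁻¹ * (g y - g x)‖ * ‖(g y)⁻¹‖ := norm_mul_le _ _
            _ ≤ ‖(g x)⁻¹‖ * ‖g y - g x‖ * ‖(g y)⁻¹‖ := by gcongr; exact norm_mul_le _ _
            _ ≤ Λ * (δ * ρ) * Λ := by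
                have h1 : ‖g y - g x‖ ≤ δ * ρ :=
                  (hglip y x).trans (by rw [norm_sub_rev]; exact mul_le_mul_of_nonneg_left hxy hδ)
                exact mul_le_mul (mul_le_mul (hginvΛ x) h1 (norm_nonneg _) hΛ0)
                  (hginvΛ y) (norm_nonneg _) (by positivity)
        calc ‖(g y * K) * ((g x)⁻¹ - (g y)⁻¹)‖
            ≤ ‖g y * K‖ * ‖(g x)⁻¹ - (g y)⁻¹‖ := norm_mul_le _ _
          _ ≤ ‖g y‖ * ‖K‖ * ‖(g x)⁻¹ - (g y)⁻¹‖ := by gcongr; exact norm_mul_le _ _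
          _ ≤ Λ * 1 * (Λ * (δ * ρ) * Λ) := by
              exact mul_le_mul (mul_le_mul (hgΛ y) hKbd (norm_nonneg _) hΛ0)
                hd (norm_nonneg _) (by positivity)
          _ = Λ ^ 3 * δ * ρ := by ring
      have hM : ‖J y + g x * K * (g x)⁻¹‖ ≤ (Λ + Λ ^ 3) * δ * ρ := by
        rw [hsplit]
        calc ‖(g x - g y) * K * (g x)⁻¹ + (g y * K) * ((g x)⁻¹ - (g y)⁻¹)‖
            ≤ ‖(g x - g y) * K * (g x)⁻¹‖ + ‖(g y * K) * ((g x)⁻¹ - (g y)⁻¹)‖ := norm_add_le _ _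
          _ ≤ Λ * δ * ρ + Λ ^ 3 * δ * ρ := add_le_add hnorm1 hnorm2
          _ = (Λ + Λ ^ 3) * δ * ρ := by ring
      rw [norm_smul, Real.norm_eq_abs, abs_of_nonneg (hφ0 z)]
      exact mul_le_mul_of_nonneg_left hM (hφ0 z)
  calc ‖∫ z : Fin n → ℝ, φ z • (J (T z) + g x * (J (T z))ᵀ * (g x)⁻¹)‖
      ≤ ∫ z : Fin n → ℝ, φ z * ((Λ + Λ ^ 3) * δ * ρ) :=
        norm_integral_le_of_norm_le (hφint'.mul_const _) hb
    _ = (Λ + Λ ^ 3) * δ * ρ := by rw [integral_mul_const, hφint, one_mul]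
end
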